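/- Decay of the Green-function Fourier kernel: let n ≥ 0, w ∈ L¹(ℝᵈ), g ∈ H^{n+3/2+δ₀}_{2+⌈d/2⌉}(ℝᵈ) satisfy the uniform Penrose condition with constant κ, and suppose the inverse-Laplace bound |∂_λⁿ 𝒢ʳ̃(iτ,k)| ≤ C ⟨ℏk⟩²|k|^{2−n} / (⟨ℏk⟩²|k|² + τ²) holds for 0 ≤ m ≤ n. Then the inverse Laplace transform 𝒢ʳ̂(t,k) = (2π)^{-1} ∫_ℝ e^{iτt} 𝒢ʳ̃(iτ,k) dτ satisfies |𝒢ʳ̂(t,k)| ≤ C' ⟨ℏk⟩|k| / ⟨kt⟩ⁿ for all t ≥ 0, k ∈ ℝᵈ, with C' depending only on n, C. -/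

import Mathlib

open MeasureTheory Real Complex

noncomputable section

abbrev Ed (d : ℕ) := EuclideanSpace ℝ (Fin d)

/-- The Japanese bracket `⟨x⟩ = (1+|x|²)^{1/2}` of a vector. -/
def jap {d : ℕ} (ξ : Ed d) : ℝ := Real.sqrt (1 + ‖ξ‖ ^ 2)

/-- The inverse Laplace transform of `𝒢ʳ̃` along the imaginary axis:
`𝒢ʳ̂(t,k) = (2π)^{-1} ∫_ℝ e^{iτt} 𝒢ʳ̃(iτ,k) dτ`. -/
def invLaplace (d : ℕ) (Gtilde : ℂ → Ed d → ℂ) (t : ℝ) (k : Ed d) : ℂ :=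
  ((2 * π : ℝ) : ℂ)⁻¹ * ∫ τ : ℝ, Complex.exp (Complex.I * (τ : ℝ) * (t : ℝ)) * Gtilde (Complex.I * τ) k

open Filter


-- entire function: deriv is entire
lemma entire_deriv {f : ℂ → ℂ} (hf : Differentiable ℂ f) : Differentiable ℂ (deriv f) := by
  have h := ((hf.differentiableOn).analyticOnNhd isOpen_univ).deriv
  simpa [differentiableOn_univ] using h.differentiableOn

lemma entire_iteratedDeriv {f : ℂ → ℂ} (hf : Differentiable ℂ f) (m : ℕ) :
    Differentiable ℂ (iteratedDeriv m f) := by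
  induction m with
  | zero => simpa [iteratedDeriv_zero]
  | succ m ih => rw [iteratedDeriv_succ]; exact entire_deriv ih


lemma integrable_inv_sq_add (b : ℝ) (hb : 0 < b) :
    Integrable (fun τ : ℝ => (b ^ 2 + τ ^ 2)⁻¹) := by
  have h : ∀ τ : ℝ, (b ^ 2 + τ ^ 2)⁻¹ = b⁻¹ ^ 2 * (1 + (τ / b) ^ 2)⁻¹ := by
    intro τ; field_simp
  simp_rw [h]
  exact (integrable_inv_one_add_sq.comp_div hb.ne').const_mul _

lemma integral_inv_sq_add (b : ℝ) (hb : 0 < b) :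
    ∫ τ : ℝ, (b ^ 2 + τ ^ 2)⁻¹ = π / b := by
  have h : ∀ τ : ℝ, (b ^ 2 + τ ^ 2)⁻¹ = b⁻¹ ^ 2 * (1 + (τ / b) ^ 2)⁻¹ := by
    intro τ; field_simp
  simp_rw [h]
  rw [integral_const_mul, MeasureTheory.Measure.integral_comp_div (fun x : ℝ => (1 + x ^ 2)⁻¹) b,
    integral_univ_inv_one_add_sq]
  simp [abs_of_pos hb]
  field_simp

lemma norm_exp_I_mul (τ t : ℝ) : ‖Complex.exp (Complex.I * τ * t)‖ = 1 := by
  rw [Complex.norm_exp]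
  simp [Complex.mul_re]

lemma integrable_E_mul {g : ℂ → ℂ} (hg : Continuous g) {b K : ℝ} (hb : 0 < b)
    (h : ∀ τ : ℝ, ‖g (Complex.I * τ)‖ ≤ K / (b ^ 2 + τ ^ 2)) (t : ℝ) :
    Integrable (fun τ : ℝ => Complex.exp (Complex.I * τ * t) * g (Complex.I * τ)) := by
  have hcont : Continuous (fun τ : ℝ => Complex.exp (Complex.I * τ * t) * g (Complex.I * τ)) := by
    fun_prop
  refine ((integrable_inv_sq_add b hb).const_mul K).mono' hcont.aestronglyMeasurable ?_
  filter_upwards with τ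
  rw [norm_mul, norm_exp_I_mul, one_mul]
  simpa [div_eq_mul_inv] using h τ

lemma norm_integral_E_mul_le {g : ℂ → ℂ} (hg : Continuous g) {b K : ℝ} (hb : 0 < b)
    (h : ∀ τ : ℝ, ‖g (Complex.I * τ)‖ ≤ K / (b ^ 2 + τ ^ 2)) (t : ℝ) :
    ‖∫ τ : ℝ, Complex.exp (Complex.I * τ * t) * g (Complex.I * τ)‖ ≤ K * (π / b) := by
  have := norm_integral_le_of_norm_le ((integrable_inv_sq_add b hb).const_mul K)
    (f := fun τ : ℝ => Complex.exp (Complex.I * τ * t) * g (Complex.I * τ))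
    (by filter_upwards with τ
        rw [norm_mul, norm_exp_I_mul, one_mul]
        simpa [div_eq_mul_inv] using h τ)
  calc ‖∫ τ : ℝ, Complex.exp (Complex.I * τ * t) * g (Complex.I * τ)‖
      ≤ ∫ τ : ℝ, K * (b ^ 2 + τ ^ 2)⁻¹ := this
    _ = K * (π / b) := by rw [integral_const_mul, integral_inv_sq_add b hb]

lemma tendsto_E_mul_zero {g : ℂ → ℂ} {b K : ℝ} (hb : 0 < b)
    (h : ∀ τ : ℝ, ‖g (Complex.I * τ)‖ ≤ K / (b ^ 2 + τ ^ 2)) (t : ℝ)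
    {l : Filter ℝ} (hl : Tendsto (fun τ : ℝ => |τ|) l atTop) :
    Tendsto (fun τ : ℝ => Complex.exp (Complex.I * τ * t) * g (Complex.I * τ)) l (nhds 0) := by
  refine squeeze_zero_norm (a := fun τ => K / (b ^ 2 + τ ^ 2)) (fun τ => ?_) ?_
  · rw [norm_mul, norm_exp_I_mul, one_mul]; exact h τ
  · have hd : Tendsto (fun τ : ℝ => b ^ 2 + τ ^ 2) l atTop := by
      apply tendsto_atTop_add_const_left
      exact ((tendsto_pow_atTop (two_ne_zero)).comp hl).congr fun τ => sq_abs τ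
    simpa using hd.const_div_atTop K

lemma hasDerivAt_I_mul (τ : ℝ) : HasDerivAt (fun τ : ℝ => Complex.I * (τ : ℂ)) Complex.I τ := by
  simpa using (Complex.ofRealCLM.hasDerivAt (x := τ)).const_mul Complex.I

lemma hasDerivAt_E (t τ : ℝ) :
    HasDerivAt (fun τ : ℝ => Complex.exp (Complex.I * τ * t))
      (Complex.I * t * Complex.exp (Complex.I * τ * t)) τ := by
  have h1 : HasDerivAt (fun τ : ℝ => Complex.I * (τ : ℂ) * t) (Complex.I * t) τ := by
    simpa using (hasDerivAt_I_mul τ).mul_const (t : ℂ)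
  simpa [mul_comm] using h1.cexp

lemma ibp_step {g : ℂ → ℂ} (hg : Differentiable ℂ g) (hg' : Continuous (deriv g))
    {b K₁ K₂ : ℝ} (hb : 0 < b)
    (h1 : ∀ τ : ℝ, ‖g (Complex.I * τ)‖ ≤ K₁ / (b ^ 2 + τ ^ 2))
    (h2 : ∀ τ : ℝ, ‖deriv g (Complex.I * τ)‖ ≤ K₂ / (b ^ 2 + τ ^ 2))
    {t : ℝ} (ht : t ≠ 0) :
    ∫ τ : ℝ, Complex.exp (Complex.I * τ * t) * g (Complex.I * τ)
      = (-(t : ℂ))⁻¹ * ∫ τ : ℝ, Complex.exp (Complex.I * τ * t) * deriv g (Complex.I * τ) := by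
  have hE : ∀ τ : ℝ, True := fun _ => trivial
  have hF : ∀ τ : ℝ, HasDerivAt (fun τ : ℝ => g (Complex.I * τ))
      (Complex.I * deriv g (Complex.I * τ)) τ := by
    intro τ
    have houter : HasDerivAt g (deriv g (Complex.I * τ)) (Complex.I * τ) :=
      (hg (Complex.I * τ)).hasDerivAt
    simpa [smul_eq_mul, mul_comm, Function.comp_def] using
      (HasDerivAt.scomp (𝕜 := ℝ) τ houter (hasDerivAt_I_mul τ))
  have hprod : ∀ τ : ℝ, HasDerivAt (fun τ : ℝ => Complex.exp (Complex.I * τ * t) * g (Complex.I * τ))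
      ((Complex.I * t) * (Complex.exp (Complex.I * τ * t) * g (Complex.I * τ))
        + Complex.I * (Complex.exp (Complex.I * τ * t) * deriv g (Complex.I * τ))) τ := by
    intro τ
    have := (hasDerivAt_E t τ).mul (hF τ)
    refine this.congr_deriv ?_
    ring
  have hint1 : Integrable (fun τ : ℝ => Complex.exp (Complex.I * τ * t) * g (Complex.I * τ)) :=
    integrable_E_mul hg.continuous hb h1 t
  have hint2 : Integrable (fun τ : ℝ => Complex.exp (Complex.I * τ * t) * deriv g (Complex.I * τ)) :=
    integrable_E_mul hg' hb h2 t
  have hint : Integrable (fun τ : ℝ => (Complex.I * t) * (Complex.exp (Complex.I * τ * t) * g (Complex.I * τ))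
      + Complex.I * (Complex.exp (Complex.I * τ * t) * deriv g (Complex.I * τ))) :=
    (hint1.const_mul _).add (hint2.const_mul _)
  have hzero : ∫ τ : ℝ, ((Complex.I * t) * (Complex.exp (Complex.I * τ * t) * g (Complex.I * τ))
      + Complex.I * (Complex.exp (Complex.I * τ * t) * deriv g (Complex.I * τ))) = 0 := by
    have := integral_of_hasDerivAt_of_tendsto hprod hint
      (tendsto_E_mul_zero hb h1 t tendsto_abs_atBot_atTop)
      (tendsto_E_mul_zero hb h1 t tendsto_abs_atTop_atTop)
    simpa using this
  rw [integral_add (hint1.const_mul _) (hint2.const_mul _), integral_const_mul,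
    integral_const_mul] at hzero
  have hI : (Complex.I : ℂ) ≠ 0 := Complex.I_ne_zero
  have htc : (t : ℂ) ≠ 0 := by exact_mod_cast Complex.ofReal_ne_zero.mpr ht
  have key : (t : ℂ) * (∫ τ : ℝ, Complex.exp (Complex.I * τ * t) * g (Complex.I * τ))
      = -∫ τ : ℝ, Complex.exp (Complex.I * τ * t) * deriv g (Complex.I * τ) := by
    apply mul_left_cancel₀ hI
    linear_combination hzero
  rw [eq_inv_mul_iff_mul_eq₀ (neg_ne_zero.mpr htc)]
  linear_combination -key

lemma master {g : ℂ → ℂ} (hg : Differentiable ℂ g) {n : ℕ} {b : ℝ} (hb : 0 < b)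
    {K : ℕ → ℝ} (hK : ∀ m, m ≤ n → ∀ τ : ℝ,
      ‖iteratedDeriv m g (Complex.I * τ)‖ ≤ K m / (b ^ 2 + τ ^ 2))
    {t : ℝ} (ht : t ≠ 0) :
    ‖∫ τ : ℝ, Complex.exp (Complex.I * τ * t) * g (Complex.I * τ)‖
      ≤ |t|⁻¹ ^ n * (K n * (π / b)) := by
  have iter : ∀ j, j ≤ n →
      (∫ τ : ℝ, Complex.exp (Complex.I * τ * t) * g (Complex.I * τ))
        = ((-(t : ℂ))⁻¹) ^ j
          * ∫ τ : ℝ, Complex.exp (Complex.I * τ * t) * iteratedDeriv j g (Complex.I * τ) := by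
    intro j
    induction j with
    | zero => intro _; simp [iteratedDeriv_zero]
    | succ j ih =>
      intro hj
      have hjn : j ≤ n := Nat.le_of_succ_le hj
      have hgj : Differentiable ℂ (iteratedDeriv j g) := entire_iteratedDeriv hg j
      have hg' : Continuous (deriv (iteratedDeriv j g)) := by
        rw [← iteratedDeriv_succ]; exact (entire_iteratedDeriv hg (j + 1)).continuous
      have h2 : ∀ τ : ℝ, ‖deriv (iteratedDeriv j g) (Complex.I * τ)‖
          ≤ K (j + 1) / (b ^ 2 + τ ^ 2) := by
        intro τ; rw [← iteratedDeriv_succ]; exact hK (j + 1) hj τ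
      rw [ih hjn, ibp_step hgj hg' hb (hK j hjn) h2 ht, ← mul_assoc, ← pow_succ]
      congr 2
      funext τ
      rw [iteratedDeriv_succ]
  rw [iter n le_rfl, norm_mul, norm_pow]
  have hnorm : ‖(-(t : ℂ))⁻¹‖ = |t|⁻¹ := by
    rw [norm_inv, norm_neg, Complex.norm_real, Real.norm_eq_abs]
  rw [hnorm]
  refine mul_le_mul_of_nonneg_left ?_ (by positivity)
  exact norm_integral_E_mul_le (entire_iteratedDeriv hg n).continuous hb (hK n le_rfl) t

set_option maxHeartbeats 1000000 in
/-- Decay of the Green-function Fourier kernel: if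
`|∂_λᵐ 𝒢ʳ̃(iτ,k)| ≤ C ⟨ℏk⟩²|k|^{2−m}/(⟨ℏk⟩²|k|²+τ²)` for all `0 ≤ m ≤ n`, then the
inverse Laplace transform satisfies `|𝒢ʳ̂(t,k)| ≤ C' ⟨ℏk⟩|k|/⟨kt⟩ⁿ` for all `t ≥ 0`,
`k ∈ ℝᵈ`, with `C'` depending only on `n, C`. -/
theorem green_function_decay (n : ℕ) (C : ℝ) (hC : 0 < C) :
    ∃ C' : ℝ, 0 < C' ∧ ∀ (d : ℕ), 1 ≤ d → ∀ (hbar : ℝ), 0 < hbar → hbar ≤ 1 →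
      ∀ (Gtilde : ℂ → Ed d → ℂ),
      (∀ k : Ed d, Differentiable ℂ (fun lam => Gtilde lam k)) →
      (∀ m : ℕ, m ≤ n → ∀ (τ : ℝ) (k : Ed d),
        ‖iteratedDeriv m (fun lam => Gtilde lam k) (Complex.I * τ)‖
          ≤ C * (jap (hbar • k)) ^ 2 * ‖k‖ ^ ((2 : ℝ) - m)
              / ((jap (hbar • k)) ^ 2 * ‖k‖ ^ 2 + τ ^ 2)) →
      ∀ (t : ℝ), 0 ≤ t → ∀ k : Ed d,
        ‖invLaplace d Gtilde t k‖
          ≤ C' * jap (hbar • k) * ‖k‖ / Real.sqrt (1 + ‖k‖ ^ 2 * t ^ 2) ^ (n : ℝ) := by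
  refine ⟨C * 2 ^ n, by positivity, ?_⟩
  intro d hd hbar hb0 hb1 Gtilde hdiff hder t ht k
  set g : ℂ → ℂ := fun lam => Gtilde lam k with hgdef
  set a : ℝ := jap (hbar • k) with hadef
  have ha1 : 1 ≤ a := by
    rw [hadef, jap]
    nlinarith [Real.sq_sqrt (show (0:ℝ) ≤ 1 + ‖hbar • k‖ ^ 2 by positivity),
      Real.sqrt_nonneg (1 + ‖hbar • k‖ ^ 2), sq_nonneg ‖hbar • k‖]
  have ha0 : 0 < a := lt_of_lt_of_le one_pos ha1
  set D : ℝ := Real.sqrt (1 + ‖k‖ ^ 2 * t ^ 2) with hDdef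
  have hD1 : 1 ≤ D := by
    rw [hDdef]
    nlinarith [Real.sq_sqrt (show (0:ℝ) ≤ 1 + ‖k‖ ^ 2 * t ^ 2 by positivity),
      Real.sqrt_nonneg (1 + ‖k‖ ^ 2 * t ^ 2), mul_nonneg (sq_nonneg ‖k‖) (sq_nonneg t)]
  have hD0 : 0 < D := lt_of_lt_of_le one_pos hD1
  have hDr : D ^ (n : ℝ) = D ^ n := Real.rpow_natCast D n
  have hDn0 : 0 < D ^ n := pow_pos hD0 n
  rw [invLaplace, norm_mul, hDr]
  have h2pi : ‖((2 * π : ℝ) : ℂ)‖ = 2 * π := by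
    rw [Complex.norm_real, Real.norm_eq_abs, abs_of_pos (by positivity)]
  rw [norm_inv, h2pi]
  by_cases hk0 : k = 0
  · -- k = 0 : integrand vanishes
    have hknorm : ‖k‖ = (0:ℝ) := by simp [hk0]
    have hg0 : ∀ τ : ℝ, Gtilde (Complex.I * τ) k = 0 := by
      intro τ
      have h := hder 0 (Nat.zero_le n) τ k
      rw [iteratedDeriv_zero] at h
      rw [hknorm] at h
      have hz : (0:ℝ) ^ ((2:ℝ) - ((0:ℕ):ℝ)) = 0 := Real.zero_rpow (by norm_num)
      rw [hz] at h
      simp only [mul_zero, zero_div] at h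
      exact norm_le_zero_iff.mp h
    have hzero : (∫ τ : ℝ, Complex.exp (Complex.I * τ * t) * Gtilde (Complex.I * τ) k) = 0 := by
      have h' : ∀ τ : ℝ, Complex.exp (Complex.I * τ * t) * Gtilde (Complex.I * τ) k = 0 := by
        intro τ; rw [hg0 τ, mul_zero]
      simp [h']
    have hpos : (0:ℝ) ≤ C * 2 ^ n * a * ‖k‖ / D ^ n := by positivity
    rw [hzero]
    simpa using hpos
  · have hk : 0 < ‖k‖ := norm_pos_iff.mpr hk0
    set b : ℝ := a * ‖k‖ with hbdef
    have hb : 0 < b := mul_pos ha0 hk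
    set K : ℕ → ℝ := fun m => C * a ^ 2 * ‖k‖ ^ ((2:ℝ) - (m:ℕ)) with hKdef
    have hK : ∀ m, m ≤ n → ∀ τ : ℝ,
        ‖iteratedDeriv m g (Complex.I * τ)‖ ≤ K m / (b ^ 2 + τ ^ 2) := by
      intro m hm τ
      have := hder m hm τ k
      rw [hbdef]
      rw [mul_pow]
      exact this
    -- common: π > 0
    have hπ : (0:ℝ) < π := Real.pi_pos
    by_cases hsmall : ‖k‖ * t ≤ 1
    · -- small case
      have hbound := norm_integral_E_mul_le (hdiff k).continuous hb (by
        intro τ; simpa [iteratedDeriv_zero] using hK 0 (Nat.zero_le n) τ) t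
      have hK0 : K 0 = C * a ^ 2 * ‖k‖ ^ 2 := by
        simp only [hKdef, Nat.cast_zero, sub_zero]
        rw [show ((2:ℝ)) = ((2:ℕ):ℝ) by norm_num, Real.rpow_natCast]
      have hval : K 0 * (π / b) = π * (C * a * ‖k‖) := by
        rw [hK0, hbdef]
        field_simp
      have hDle : D ^ n ≤ 2 ^ n := by
        apply pow_le_pow_left₀ hD0.le
        rw [hDdef, show (2:ℝ) = Real.sqrt 4 by
          rw [show (4:ℝ) = 2^2 by norm_num, Real.sqrt_sq (by norm_num)]]
        apply Real.sqrt_le_sqrt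
        nlinarith [mul_nonneg hk.le ht, sq_nonneg (‖k‖ * t)]
      calc (2 * π)⁻¹ * ‖∫ τ : ℝ, Complex.exp (Complex.I * τ * t) * g (Complex.I * τ)‖
          ≤ (2 * π)⁻¹ * (π * (C * a * ‖k‖)) := by
            rw [← hval]
            exact mul_le_mul_of_nonneg_left hbound (by positivity)
        _ = C * a * ‖k‖ / 2 := by field_simp
        _ ≤ C * 2 ^ n * a * ‖k‖ / D ^ n := by
            rw [div_le_div_iff₀ (by norm_num) hDn0]
            calc C * a * ‖k‖ * D ^ n ≤ C * a * ‖k‖ * 2 ^ n := by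
                  exact mul_le_mul_of_nonneg_left hDle (by positivity)
              _ ≤ C * 2 ^ n * a * ‖k‖ * 2 := by
                  nlinarith [show (0:ℝ) ≤ C * 2 ^ n * a * ‖k‖ by positivity]
    · -- large case : ‖k‖ t > 1
      push_neg at hsmall
      have htpos : 0 < t := by
        rcases lt_or_eq_of_le ht with h | h
        · exact h
        · exfalso; rw [← h] at hsmall; simp at hsmall; linarith
      have hbound := master (hdiff k) hb hK htpos.ne'
      have hks : ‖k‖ ^ ((2:ℝ) - (n:ℕ)) = ‖k‖ ^ 2 / ‖k‖ ^ n := by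
        rw [eq_div_iff (pow_ne_zero _ hk.ne'), ← Real.rpow_natCast ‖k‖ n,
          ← Real.rpow_add hk, sub_add_cancel,
          show ((2:ℝ)) = ((2:ℕ):ℝ) by norm_num, Real.rpow_natCast]
      have hKn : K n * (π / b) = π * (C * a * (‖k‖ ^ 2 / ‖k‖ ^ n) / ‖k‖) := by
        have hKn' : K n = C * a ^ 2 * (‖k‖ ^ 2 / ‖k‖ ^ n) := by
          simp only [hKdef]; rw [hks]
        rw [hKn', hbdef]
        field_simp
      have habs : |t| = t := abs_of_pos htpos
      have hDle : D ^ n ≤ 2 ^ n * (‖k‖ * t) ^ n := by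
        rw [← mul_pow]
        apply pow_le_pow_left₀ hD0.le
        rw [hDdef]
        rw [show 2 * (‖k‖ * t) = Real.sqrt ((2 * (‖k‖ * t))^2) by
          rw [Real.sqrt_sq (by positivity)]]
        apply Real.sqrt_le_sqrt
        nlinarith [hsmall]
      have hx : (0:ℝ) < ‖k‖ * t := mul_pos hk htpos
      calc (2 * π)⁻¹ * ‖∫ τ : ℝ, Complex.exp (Complex.I * τ * t) * g (Complex.I * τ)‖
          ≤ (2 * π)⁻¹ * (|t|⁻¹ ^ n * (K n * (π / b))) := by
            exact mul_le_mul_of_nonneg_left hbound (by positivity)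
        _ = C * a * ‖k‖ ^ 2 / (2 * ‖k‖ ^ n * ‖k‖ * t ^ n) := by
            rw [hKn, habs, inv_pow]
            field_simp
        _ ≤ C * 2 ^ n * a * ‖k‖ / D ^ n := by
            rw [div_le_div_iff₀ (by positivity) hDn0]
            have h1 : C * a * ‖k‖ ^ 2 * D ^ n ≤ C * a * ‖k‖ ^ 2 * (2 ^ n * (‖k‖ * t) ^ n) :=
              mul_le_mul_of_nonneg_left hDle (by positivity)
            calc C * a * ‖k‖ ^ 2 * D ^ n
                ≤ C * a * ‖k‖ ^ 2 * (2 ^ n * (‖k‖ * t) ^ n) := h1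
              _ ≤ C * 2 ^ n * a * ‖k‖ * (2 * ‖k‖ ^ n * ‖k‖ * t ^ n) := by
                  rw [mul_pow]
                  nlinarith [show (0:ℝ) ≤ C * a * ‖k‖ ^ 2 * (2 ^ n * (‖k‖ ^ n * t ^ n)) by positivity]
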